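/- (Pringsheim's theorem) Suppose the power series F(z) = ∑_{n≥0} a_n zⁿ has finite positive radius of convergence R and all coefficients a_n are nonnegative real numbers. Then F cannot be extended to a function analytic in a neighborhood of z = R; i.e., z = R is a singular point of F. -/

import Mathlib

open Filter Metric
open scoped NNReal ENNReal

/-- Binomial expansion as a `HasSum` over all of `ℕ` (terms with `k > n` vanish). -/
lemma pringsheim_aux_binom {M : Type*} [CommSemiring M] [TopologicalSpace M]
    (x y A : M) (n : ℕ) :
    HasSum (fun k : ℕ => A * (n.choose k : M) * x ^ (n - k) * y ^ k) (A * (x + y) ^ n) := by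
  have hz : ∀ k ∉ Finset.range (n + 1),
      A * (n.choose k : M) * x ^ (n - k) * y ^ k = 0 := by
    intro k hk
    rw [Finset.mem_range, not_lt] at hk
    simp [Nat.choose_eq_zero_of_lt (by omega : n < k)]
  have h : HasSum (fun k : ℕ => A * (n.choose k : M) * x ^ (n - k) * y ^ k) _ :=
    hasSum_sum_of_ne_finset_zero hz
  convert h using 1
  rw [add_comm x y, add_pow, Finset.mul_sum]
  refine Finset.sum_congr rfl fun k hk => by ring

/-- Geometric lemma: a slightly enlarged disc around `R/2` is covered by the disc of radius `R`
around `0` together with a small disc around `R`. -/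
lemma pringsheim_aux_geom {R ε δ : ℝ} (hR : 0 < R) (hε : 0 < ε) (hδ : 0 < δ)
    (hδ1 : δ ≤ R) (hδ2 : δ ≤ ε ^ 2 / (4 * R)) :
    ball (((R / 2 : ℝ)) : ℂ) (R / 2 + δ) ⊆ ball (0 : ℂ) R ∪ ball ((R : ℝ) : ℂ) ε := by
  intro z hz
  rw [mem_ball] at hz
  by_cases h2 : z ∈ ball ((R : ℝ) : ℂ) ε
  · exact Or.inr h2
  rw [mem_ball, not_lt] at h2
  left
  rw [mem_ball]
  have key : (dist z 0) ^ 2 + (dist z ((R : ℝ) : ℂ)) ^ 2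
      = 2 * (dist z (((R / 2 : ℝ)) : ℂ)) ^ 2 + R ^ 2 / 2 := by
    simp only [Complex.dist_eq, Complex.sq_norm, Complex.normSq_apply, Complex.sub_re,
      Complex.sub_im, Complex.ofReal_re, Complex.ofReal_im, Complex.zero_re, Complex.zero_im,
      sub_zero]
    ring
  have h0 : 0 ≤ dist z 0 := dist_nonneg
  have h1 : 0 ≤ dist z (((R / 2 : ℝ)) : ℂ) := dist_nonneg
  have h4 : 4 * R * δ ≤ ε ^ 2 := by
    rw [le_div_iff₀ (by positivity)] at hδ2; linarith
  have h6 : ε ^ 2 ≤ (dist z ((R : ℝ) : ℂ)) ^ 2 := by nlinarith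
  have h7 : (dist z (((R / 2 : ℝ)) : ℂ)) ^ 2 < (R / 2 + δ) ^ 2 := by nlinarith
  have hsq : (dist z 0) ^ 2 < R ^ 2 := by nlinarith
  exact lt_of_pow_lt_pow_left₀ 2 hR.le hsq

set_option maxHeartbeats 1000000

/-- Pringsheim's theorem: a power series with nonnegative real coefficients and
finite positive radius of convergence `R` has a singularity at `z = R`, i.e. there is
no function analytic at `R` agreeing with the series near `R` inside the disc. -/
theorem pringsheim (a : ℕ → ℝ) (ha : ∀ n, 0 ≤ a n) (R : ℝ) (hR : 0 < R)
    (hconv : ∀ z : ℂ, ‖z‖ < R → Summable fun n : ℕ => (a n : ℂ) * z ^ n)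
    (hdiv : ∀ r : ℝ, R < r → ¬ Summable fun n : ℕ => a n * r ^ n) :
    ¬ ∃ g : ℂ → ℂ, AnalyticAt ℂ g (R : ℂ) ∧
      ∀ᶠ z in nhdsWithin (R : ℂ) (Metric.ball (0:ℂ) R),
        g z = ∑' n : ℕ, (a n : ℂ) * z ^ n := by
  classical
  rintro ⟨g, hg, hagree⟩
  set F : ℂ → ℂ := fun z => ∑' n : ℕ, (a n : ℂ) * z ^ n with hF
  -- real summability strictly inside the radius
  have hconvR : ∀ s : ℝ, 0 ≤ s → s < R → Summable fun n => a n * s ^ n := by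
    intro s hs0 hsR
    have h := hconv (s : ℂ) (by simpa [Complex.norm_real, abs_of_nonneg hs0] using hsR)
    rw [← Complex.summable_ofReal]
    refine h.congr fun n => ?_
    push_cast; ring
  -- the formal power series of F at 0
  set q := FormalMultilinearSeries.ofScalars ℂ (fun n => (a n : ℂ)) with hq
  have hqnorm : ∀ n, ‖q n‖ = a n := fun n => by
    rw [hq, FormalMultilinearSeries.ofScalars_norm, Complex.norm_real,
      Real.norm_eq_abs, abs_of_nonneg (ha n)]
  have hqrad : ∀ r : ℝ≥0, (r : ℝ) < R → (r : ℝ≥0∞) ≤ q.radius := by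
    intro r hr
    apply FormalMultilinearSeries.le_radius_of_summable
    simp only [hqnorm]
    exact hconvR r r.coe_nonneg hr
  have hq0 : 0 < q.radius := by
    refine lt_of_lt_of_le ?_ (hqrad (R / 2).toNNReal ?_)
    · exact_mod_cast Real.toNNReal_pos.mpr (by linarith)
    · rw [Real.coe_toNNReal _ (by linarith)]; linarith
  have hFsum : ∀ z, q.sum z = F z := by
    intro z
    refine tsum_congr fun n => ?_
    rw [hq, FormalMultilinearSeries.ofScalars_apply_eq, smul_eq_mul]
  have hFdiff : ∀ z : ℂ, ‖z‖ < R → DifferentiableAt ℂ F z := by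
    intro z hz
    have hz2 : ((‖z‖ + R) / 2 : ℝ) < R := by linarith
    have hzpos : (0:ℝ) ≤ (‖z‖ + R) / 2 := by positivity
    have h1 : (((‖z‖ + R) / 2).toNNReal : ℝ≥0∞) ≤ q.radius :=
      hqrad _ (by rwa [Real.coe_toNNReal _ hzpos])
    have hmem : z ∈ EMetric.ball (0:ℂ) q.radius := by
      show z ∈ Metric.eball (0:ℂ) q.radius
      rw [mem_emetric_ball_zero_iff]
      refine lt_of_lt_of_le (lt_of_lt_of_le ?_ h1) le_rfl
      change ((‖z‖₊ : ℝ≥0) : ℝ≥0∞) < _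
      rw [show (‖z‖₊ : ℝ≥0∞) = ((‖z‖.toNNReal : ℝ≥0) : ℝ≥0∞) by
        rw [norm_toNNReal]]
      exact_mod_cast Real.toNNReal_lt_toNNReal_iff (by positivity) |>.mpr (by linarith)
    have hA : AnalyticAt ℂ q.sum z :=
      (q.hasFPowerSeriesOnBall hq0).analyticAt_of_mem hmem
    exact funext hFsum ▸ hA.differentiableAt
  -- unpack the agreement hypothesis
  rw [eventually_nhdsWithin_iff, Metric.eventually_nhds_iff] at hagree
  obtain ⟨ε₀, hε₀, hag⟩ := hagree
  -- g is analytic on a small ball around R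
  obtain ⟨s, hs_nhds, hs⟩ := hg.eventually_analyticAt.exists_mem
  obtain ⟨ε₁, hε₁, hball₁⟩ := Metric.mem_nhds_iff.mp hs_nhds
  set ε : ℝ := min ε₀ (min ε₁ R) with hεdef
  have hεpos : 0 < ε := lt_min hε₀ (lt_min hε₁ hR)
  have hεle₀ : ε ≤ ε₀ := min_le_left _ _
  have hεle₁ : ε ≤ ε₁ := (min_le_right _ _).trans (min_le_left _ _)
  -- the glued function
  set h : ℂ → ℂ := fun z => if z ∈ ball (0:ℂ) R then F z else g z with hh
  have hd1 : ∀ z ∈ ball (0:ℂ) R, h z = F z := fun z hz => if_pos hz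
  have hd2 : ∀ z ∈ ball ((R : ℝ) : ℂ) ε, h z = g z := by
    intro z hz
    by_cases hz' : z ∈ ball (0:ℂ) R
    · rw [hd1 z hz']
      exact (hag (lt_of_lt_of_le (mem_ball.mp hz) hεle₀) hz').symm
    · exact if_neg hz'
  -- δ and the covering
  set δ : ℝ := min R (ε ^ 2 / (4 * R)) with hδdef
  have hδpos : 0 < δ := lt_min hR (by positivity)
  have hδR : δ ≤ R := min_le_left _ _
  have hsub : ball (((R / 2 : ℝ)) : ℂ) (R / 2 + δ) ⊆ ball (0 : ℂ) R ∪ ball ((R : ℝ) : ℂ) ε :=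
    pringsheim_aux_geom hR hεpos hδpos hδR (min_le_right _ _)
  -- h is differentiable on the union
  have hdiffU : ∀ z ∈ ball (0 : ℂ) R ∪ ball ((R : ℝ) : ℂ) ε, DifferentiableAt ℂ h z := by
    rintro z (hz | hz)
    · refine (hFdiff z (by simpa [mem_ball, dist_zero_right] using hz)).congr_of_eventuallyEq ?_
      exact Filter.eventuallyEq_of_mem (isOpen_ball.mem_nhds hz) hd1
    · have hga : AnalyticAt ℂ g z :=
        hs z (hball₁ (mem_ball.mpr (lt_of_lt_of_le (mem_ball.mp hz) hεle₁)))
      refine hga.differentiableAt.congr_of_eventuallyEq ?_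
      exact Filter.eventuallyEq_of_mem (isOpen_ball.mem_nhds hz) hd2
  -- Cauchy power series of h on a ball around R/2 of radius > R/2
  set x₀c : ℂ := ((R / 2 : ℝ) : ℂ) with hx₀c
  set ρ : ℝ≥0 := (R / 2 + δ / 2).toNNReal with hρdef
  have hρcoe : (ρ : ℝ) = R / 2 + δ / 2 := Real.coe_toNNReal _ (by positivity)
  have hρpos : 0 < ρ := Real.toNNReal_pos.mpr (by positivity)
  have hdiffh : DifferentiableOn ℂ h (closedBall x₀c (ρ : ℝ)) := by
    intro z hz
    refine (hdiffU z (hsub ?_)).differentiableWithinAt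
    have := mem_closedBall.mp hz
    rw [mem_ball]
    rw [hρcoe] at this
    linarith
  have hcauchy : HasFPowerSeriesOnBall h (cauchyPowerSeries h x₀c ρ) x₀c ρ :=
    hdiffh.hasFPowerSeriesOnBall hρpos
  -- the Taylor coefficients of F at R/2
  set b : ℕ → ℝ := fun k => ∑' n : ℕ, a n * (n.choose k : ℝ) * (R / 2) ^ (n - k) with hbdef
  have hR2 : (0:ℝ) ≤ R / 2 := by linarith
  have hb0 : ∀ k, 0 ≤ b k := fun k => tsum_nonneg fun n =>
    mul_nonneg (mul_nonneg (ha n) (Nat.cast_nonneg _)) (pow_nonneg hR2 _)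
  set P := FormalMultilinearSeries.ofScalars ℂ (fun k => (b k : ℂ)) with hP
  have hPnorm : ∀ k, ‖P k‖ = b k := fun k => by
    rw [hP, FormalMultilinearSeries.ofScalars_norm, Complex.norm_real,
      Real.norm_eq_abs, abs_of_nonneg (hb0 k)]
  -- double-sum summability for s < R/2
  have hprod : ∀ s : ℝ, 0 ≤ s → s < R / 2 →
      Summable (fun p : ℕ × ℕ =>
        a p.1 * (p.1.choose p.2 : ℝ) * (R / 2) ^ (p.1 - p.2) * s ^ p.2) := by
    intro s hs0 hs
    rw [summable_prod_of_nonneg (fun p => mul_nonneg (mul_nonneg (mul_nonneg (ha p.1)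
      (Nat.cast_nonneg _)) (pow_nonneg hR2 _)) (pow_nonneg hs0 _))]
    refine ⟨fun n => (pringsheim_aux_binom (R / 2) s (a n) n).summable, ?_⟩
    have heq : ∀ n : ℕ,
        (∑' k : ℕ, a n * (n.choose k : ℝ) * (R / 2) ^ (n - k) * s ^ k)
          = a n * (R / 2 + s) ^ n :=
      fun n => (pringsheim_aux_binom (R / 2) s (a n) n).tsum_eq
    refine (hconvR (R / 2 + s) (by positivity) (by linarith)).congr fun n => (heq n).symm
  -- each column is summable
  have hcol : ∀ k : ℕ, Summable (fun n => a n * (n.choose k : ℝ) * (R / 2) ^ (n - k)) := by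
    intro k
    have h4 := ((hprod (R / 4) (by positivity) (by linarith)).prod_symm).prod_factor k
    have h5 := h4.mul_right (((R / 4) ^ k)⁻¹)
    refine h5.congr fun n => ?_
    have : ((R / 4 : ℝ) ^ k) ≠ 0 := pow_ne_zero _ (by positivity)
    dsimp only [Prod.swap_prod_mk]
    field_simp
  -- summability of the column sums for s < R/2
  have hbsum : ∀ s : ℝ, 0 ≤ s → s < R / 2 → Summable (fun k => b k * s ^ k) := by
    intro s h0 h1
    have h2 := ((hprod s h0 h1).prod_symm).prod
    refine h2.congr fun k => ?_
    simp only [Prod.swap_prod_mk]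
    exact tsum_mul_right
  -- the complex power series expansion of F at R/2
  have hL4 : ∀ y : ℂ, ‖y‖ < R / 2 →
      HasSum (fun k : ℕ => (b k : ℂ) * y ^ k) (F (x₀c + y)) := by
    intro y hy
    have hf2 : Summable (fun p : ℕ × ℕ =>
        (a p.1 : ℂ) * (p.1.choose p.2 : ℂ) * ((R / 2 : ℝ) : ℂ) ^ (p.1 - p.2) * y ^ p.2) := by
      apply Summable.of_norm
      refine (hprod ‖y‖ (norm_nonneg y) hy).congr fun p => ?_
      simp only [norm_mul, norm_pow, Complex.norm_real, Complex.norm_natCast,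
        Real.norm_eq_abs, abs_of_nonneg (ha p.1), abs_of_nonneg hR2]
    have hrow : ∀ n : ℕ, HasSum
        (fun k => (a n : ℂ) * (n.choose k : ℂ) * ((R / 2 : ℝ) : ℂ) ^ (n - k) * y ^ k)
        ((a n : ℂ) * (((R / 2 : ℝ) : ℂ) + y) ^ n) :=
      fun n => pringsheim_aux_binom _ _ _ n
    have hswap : HasSum (fun p : ℕ × ℕ =>
        (a p.2 : ℂ) * (p.2.choose p.1 : ℂ) * ((R / 2 : ℝ) : ℂ) ^ (p.2 - p.1) * y ^ p.1)
        (∑' p : ℕ × ℕ,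
          (a p.1 : ℂ) * (p.1.choose p.2 : ℂ) * ((R / 2 : ℝ) : ℂ) ^ (p.1 - p.2) * y ^ p.2) :=
      ((Equiv.prodComm ℕ ℕ).hasSum_iff).mpr hf2.hasSum
    have hcolC : ∀ k : ℕ, HasSum
        (fun n => (a n : ℂ) * (n.choose k : ℂ) * ((R / 2 : ℝ) : ℂ) ^ (n - k) * y ^ k)
        ((b k : ℂ) * y ^ k) := by
      intro k
      have hsk : Summable (fun n =>
          (a n : ℂ) * (n.choose k : ℂ) * ((R / 2 : ℝ) : ℂ) ^ (n - k) * y ^ k) :=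
        hswap.summable.prod_factor k
      have htsum : (∑' n : ℕ, (a n : ℂ) * (n.choose k : ℂ) * ((R / 2 : ℝ) : ℂ) ^ (n - k) * y ^ k)
          = (b k : ℂ) * y ^ k := by
        rw [tsum_mul_right]
        congr 1
        simp only [hbdef]
        rw [Complex.ofReal_tsum]
        exact tsum_congr fun n => by push_cast; ring
      exact htsum ▸ hsk.hasSum
    have htotal : HasSum (fun n : ℕ => (a n : ℂ) * (((R / 2 : ℝ) : ℂ) + y) ^ n)
        (∑' p : ℕ × ℕ,
          (a p.1 : ℂ) * (p.1.choose p.2 : ℂ) * ((R / 2 : ℝ) : ℂ) ^ (p.1 - p.2) * y ^ p.2) :=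
      hf2.hasSum.prod_fiberwise hrow
    have hcols : HasSum (fun k : ℕ => (b k : ℂ) * y ^ k)
        (∑' p : ℕ × ℕ,
          (a p.1 : ℂ) * (p.1.choose p.2 : ℂ) * ((R / 2 : ℝ) : ℂ) ^ (p.1 - p.2) * y ^ p.2) :=
      hswap.prod_fiberwise hcolC
    have hFval : F (x₀c + y) = ∑' p : ℕ × ℕ,
        (a p.1 : ℂ) * (p.1.choose p.2 : ℂ) * ((R / 2 : ℝ) : ℂ) ^ (p.1 - p.2) * y ^ p.2 := by
      exact htotal.tsum_eq
    exact hFval ▸ hcols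
  -- F has power series P at x₀c
  have hr4pos : (0:ℝ) < R / 4 := by linarith
  have hFP : HasFPowerSeriesOnBall F P x₀c (((R / 4).toNNReal : ℝ≥0) : ℝ≥0∞) := by
    refine ⟨?_, ?_, ?_⟩
    · apply FormalMultilinearSeries.le_radius_of_summable
      simp only [hPnorm]
      rw [Real.coe_toNNReal _ hr4pos.le]
      exact hbsum (R / 4) hr4pos.le (by linarith)
    · exact_mod_cast Real.toNNReal_pos.mpr hr4pos
    · intro y hy
      rw [mem_emetric_ball_zero_iff] at hy
      have hy' : ‖y‖ < R / 4 := by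
        have := hy
        change ((‖y‖₊ : ℝ≥0) : ℝ≥0∞) < _ at this
        rw [show ((‖y‖₊ : ℝ≥0) : ℝ≥0∞) = (((‖y‖.toNNReal : ℝ≥0)) : ℝ≥0∞) by rw [norm_toNNReal],
          ENNReal.coe_lt_coe, Real.toNNReal_lt_toNNReal_iff hr4pos] at this
        exact this
      have h2 : (fun k : ℕ => P k fun _ => y) = fun k => (b k : ℂ) * y ^ k := by
        funext k
        rw [hP, FormalMultilinearSeries.ofScalars_apply_eq, smul_eq_mul]
      rw [h2]
      exact hL4 y (by linarith)
  -- h agrees with F near x₀c, so h has power series P at x₀c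
  have hx₀mem : x₀c ∈ ball (0:ℂ) R := by
    rw [mem_ball, dist_zero_right, hx₀c, Complex.norm_real, Real.norm_eq_abs,
      abs_of_nonneg hR2]
    linarith
  have hhF : F =ᶠ[nhds x₀c] h :=
    Filter.eventuallyEq_of_mem (isOpen_ball.mem_nhds hx₀mem) fun z hz => (hd1 z hz).symm
  have hPAt : HasFPowerSeriesAt h P x₀c := hFP.hasFPowerSeriesAt.congr hhF
  -- uniqueness of power series: P is the Cauchy series, hence has radius ≥ ρ
  have hPeq : P = cauchyPowerSeries h x₀c ρ :=
    hPAt.eq_formalMultilinearSeries hcauchy.hasFPowerSeriesAt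
  have hPrad : (ρ : ℝ≥0∞) ≤ P.radius := by rw [hPeq]; exact hcauchy.r_le
  -- summability of b k * t^k for t = R/2 + δ/4 > R/2
  set t : ℝ := R / 2 + δ / 4 with htdef
  have htpos : 0 < t := by positivity
  have htlt : ((t.toNNReal : ℝ≥0) : ℝ≥0∞) < P.radius := by
    refine lt_of_lt_of_le ?_ hPrad
    rw [hρdef, ENNReal.coe_lt_coe, Real.toNNReal_lt_toNNReal_iff (by positivity)]
    linarith
  have hsumt : Summable fun k => b k * t ^ k := by
    have h1 := P.summable_norm_mul_pow htlt
    refine h1.congr fun k => ?_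
    rw [hPnorm, Real.coe_toNNReal _ htpos.le]
  -- reassemble: a n * (R + δ/4)^n is summable, contradiction
  have hfinal : Summable fun n => a n * (R / 2 + t) ^ n := by
    have hswap2 : Summable (fun p : ℕ × ℕ =>
        a p.2 * (p.2.choose p.1 : ℝ) * (R / 2) ^ (p.2 - p.1) * t ^ p.1) := by
      rw [summable_prod_of_nonneg (fun p => mul_nonneg (mul_nonneg (mul_nonneg (ha p.2)
        (Nat.cast_nonneg _)) (pow_nonneg hR2 _)) (pow_nonneg htpos.le _))]
      constructor
      · exact fun k => (hcol k).mul_right (t ^ k)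
      · refine hsumt.congr fun k => ?_
        exact (tsum_mul_right).symm
    have hback : Summable (fun p : ℕ × ℕ =>
        a p.1 * (p.1.choose p.2 : ℝ) * (R / 2) ^ (p.1 - p.2) * t ^ p.2) :=
      ((Equiv.prodComm ℕ ℕ).summable_iff).mpr hswap2
    have h2 := hback.prod
    refine h2.congr fun n => ?_
    exact (pringsheim_aux_binom (R / 2) t (a n) n).tsum_eq
  refine hdiv (R / 2 + t) (by rw [htdef]; linarith) hfinal
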